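/- Let x, y ≥ 0, γ ∈ (0,1), λ > 0 with |x − y| < x/2. Then there exists c ∈ (0,1) and a constant C such that |e^{λx^γ} − e^{λy^γ}| ≤ λ·C·(|x−y|/(x^{1−γ} + y^{1−γ}))·e^{cλ|x−y|^γ}·e^{λx^γ}. -/

import Mathlib

private lemma exp_sub_one_le (t : ℝ) (ht : 0 ≤ t) : Real.exp t - 1 ≤ t * Real.exp t := by
  have h1 := Real.add_one_le_exp (-t)
  have h2 : Real.exp (-t) = (Real.exp t)⁻¹ := Real.exp_neg t
  have h3 : 0 < Real.exp t := Real.exp_pos t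
  rw [h2] at h1
  have h4 : (-t + 1) * Real.exp t ≤ 1 := by
    calc (-t + 1) * Real.exp t ≤ (Real.exp t)⁻¹ * Real.exp t := by
          apply mul_le_mul_of_nonneg_right h1 h3.le
      _ = 1 := inv_mul_cancel₀ h3.ne'
  nlinarith

private lemma rpow_sub_rpow_le (γ : ℝ) (hγ0 : 0 < γ) (hγ1 : γ < 1) {a b : ℝ}
    (hb : 0 < b) (hba : b ≤ a) :
    a ^ γ - b ^ γ ≤ γ * (a - b) * b ^ (γ - 1) := by
  have hs : (0:ℝ) ≤ (a - b) / b := div_nonneg (by linarith) hb.le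
  have hbern := rpow_one_add_le_one_add_mul_self (s := (a-b)/b)
      (by linarith) hγ0.le hγ1.le
  have ha : 0 < a := lt_of_lt_of_le hb hba
  have key : a ^ γ ≤ b ^ γ * (1 + γ * ((a - b) / b)) := by
    have h1 : a ^ γ = b ^ γ * (1 + (a - b) / b) ^ γ := by
      rw [← Real.mul_rpow hb.le (by linarith)]
      congr 1
      field_simp
      ring
    rw [h1]
    exact mul_le_mul_of_nonneg_left hbern (Real.rpow_nonneg hb.le γ)
  have hpow : b ^ (γ - 1) = b ^ γ / b := Real.rpow_sub_one hb.ne' γ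
  rw [hpow]
  have : b ^ γ * (1 + γ * ((a - b) / b)) = b ^ γ + γ * (a - b) * (b ^ γ / b) := by
    field_simp
  linarith [key, this ▸ key]

/-- Difference of Gevrey exponentials: for `γ ∈ (0,1)` and `λ > 0` there exist `c ∈ (0,1)` and a
constant `C` such that whenever `x, y ≥ 0` and `|x − y| < x/2`,
`|e^{λx^γ} − e^{λy^γ}| ≤ λ C (|x−y|/(x^{1−γ}+y^{1−γ})) e^{cλ|x−y|^γ} e^{λx^γ}`. -/
theorem gevrey_exponential_difference (γ lam : ℝ) (hγ0 : 0 < γ) (hγ1 : γ < 1)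
    (hlam : 0 < lam) :
    ∃ c ∈ Set.Ioo (0 : ℝ) 1, ∃ C : ℝ, ∀ x y : ℝ, 0 ≤ x → 0 ≤ y → |x - y| < x / 2 →
      |Real.exp (lam * x ^ γ) - Real.exp (lam * y ^ γ)| ≤
        lam * C * (|x - y| / (x ^ (1 - γ) + y ^ (1 - γ))) *
          Real.exp (c * lam * |x - y| ^ γ) * Real.exp (lam * x ^ γ) := by
  refine ⟨γ, ⟨hγ0, hγ1⟩, 6, fun x y hx hy hxy => ?_⟩
  have habs := abs_nonneg (x - y)
  have hx0 : 0 < x := by linarith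
  have hsub : x - y ≤ |x - y| := le_abs_self _
  have hyx : x / 2 < y := by linarith
  have hy0 : 0 < y := by linarith
  set d := |x - y| with hd
  -- trivial case d = 0
  rcases eq_or_lt_of_le habs with h0 | hd0
  · have hxy' : x = y := by
      have : x - y = 0 := abs_eq_zero.mp h0.symm
      linarith
    subst hxy'
    rw [sub_self, abs_zero]
    positivity
  -- now d > 0
  have hdx : d < x := by linarith
  have hdy : d < y := by linarith
  have hyub : y ≤ 2 * x := by
    have : y - x ≤ |x - y| := by rw [abs_sub_comm]; exact le_abs_self _
    linarith
  -- key bound on |x^γ - y^γ| via min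
  set m := min x y with hm
  have hm0 : 0 < m := lt_min hx0 hy0
  have hmd : d < m := lt_min hdx hdy
  have hmx2 : x / 2 ≤ m := le_min (by linarith) hyx.le
  have hkey : |x ^ γ - y ^ γ| ≤ γ * d * m ^ (γ - 1) := by
    rcases le_total x y with hxy2 | hxy2
    · have h1 : y ^ γ - x ^ γ ≤ γ * (y - x) * x ^ (γ - 1) :=
        rpow_sub_rpow_le γ hγ0 hγ1 hx0 hxy2
      have hmx : m = x := min_eq_left hxy2
      have hd2 : d = y - x := by rw [hd, abs_sub_comm, abs_of_nonneg (by linarith)]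
      have hxg : x ^ γ ≤ y ^ γ := Real.rpow_le_rpow hx hxy2 hγ0.le
      rw [abs_of_nonpos (by linarith), hmx, hd2]
      linarith
    · have h1 : x ^ γ - y ^ γ ≤ γ * (x - y) * y ^ (γ - 1) :=
        rpow_sub_rpow_le γ hγ0 hγ1 hy0 hxy2
      have hmy : m = y := min_eq_right hxy2
      have hd2 : d = x - y := by rw [hd, abs_of_nonneg (by linarith)]
      have hyg : y ^ γ ≤ x ^ γ := Real.rpow_le_rpow hy hxy2 hγ0.le
      rw [abs_of_nonneg (by linarith), hmy, hd2]
      linarith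
  -- bound 1 : |x^γ - y^γ| ≤ γ * d^γ
  have hb1 : |x ^ γ - y ^ γ| ≤ γ * d ^ γ := by
    have h1 : m ^ (γ - 1) ≤ d ^ (γ - 1) :=
      Real.rpow_le_rpow_of_nonpos hd0 hmd.le (by linarith)
    have h2 : d * d ^ (γ - 1) = d ^ γ := by
      rw [← Real.rpow_one_add' hd0.le (by intro h; linarith)]
      ring_nf
    calc |x ^ γ - y ^ γ| ≤ γ * d * m ^ (γ - 1) := hkey
      _ ≤ γ * d * d ^ (γ - 1) := by
          apply mul_le_mul_of_nonneg_left h1 (by positivity)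
      _ = γ * d ^ γ := by rw [mul_assoc, h2]
  -- bound 2 : |x^γ - y^γ| ≤ 6 * (d / (x^(1-γ) + y^(1-γ)))
  have hb2 : |x ^ γ - y ^ γ| ≤ 6 * (d / (x ^ (1 - γ) + y ^ (1 - γ))) := by
    have hX : (0:ℝ) < x ^ (1 - γ) := Real.rpow_pos_of_pos hx0 _
    have hY : (0:ℝ) < y ^ (1 - γ) := Real.rpow_pos_of_pos hy0 _
    have hsum3 : x ^ (1 - γ) + y ^ (1 - γ) ≤ 3 * x ^ (1 - γ) := by
      have h1 : y ^ (1 - γ) ≤ (2 * x) ^ (1 - γ) :=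
        Real.rpow_le_rpow hy hyub (by linarith)
      have h2 : (2 * x) ^ (1 - γ) = 2 ^ (1 - γ) * x ^ (1 - γ) :=
        Real.mul_rpow (by norm_num) hx0.le
      have h3 : (2:ℝ) ^ (1 - γ) ≤ 2 ^ (1:ℝ) :=
        Real.rpow_le_rpow_of_exponent_le (by norm_num) (by linarith)
      have h4 : (2:ℝ) ^ (1:ℝ) = 2 := Real.rpow_one 2
      nlinarith [hX.le]
    have hmlow : m ^ (γ - 1) ≤ 2 / x ^ (1 - γ) := by
      have h1 : m ^ (γ - 1) ≤ (x / 2) ^ (γ - 1) :=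
        Real.rpow_le_rpow_of_nonpos (by linarith) hmx2 (by linarith)
      have h2 : (x / 2) ^ (γ - 1) = (x / 2) ^ (-(1 - γ)) := by ring_nf
      have h3 : (x / 2) ^ (-(1 - γ)) = ((x / 2) ^ (1 - γ))⁻¹ :=
        Real.rpow_neg (by linarith) _
      have h4 : (x / 2) ^ (1 - γ) = x ^ (1 - γ) / 2 ^ (1 - γ) :=
        Real.div_rpow hx0.le (by norm_num : (0:ℝ) ≤ 2) (1 - γ)
      have h5 : (2:ℝ) ^ (1 - γ) ≤ 2 := by
        calc (2:ℝ) ^ (1 - γ) ≤ 2 ^ (1:ℝ) :=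
              Real.rpow_le_rpow_of_exponent_le (by norm_num) (by linarith)
          _ = 2 := Real.rpow_one 2
      have h6 : (0:ℝ) < (2:ℝ) ^ (1 - γ) := Real.rpow_pos_of_pos (by norm_num) _
      rw [h2, h3, h4] at h1
      calc m ^ (γ - 1) ≤ (x ^ (1 - γ) / 2 ^ (1 - γ))⁻¹ := h1
        _ = 2 ^ (1 - γ) / x ^ (1 - γ) := by
            rw [inv_div]
        _ ≤ 2 / x ^ (1 - γ) := by gcongr
    calc |x ^ γ - y ^ γ| ≤ γ * d * m ^ (γ - 1) := hkey
      _ ≤ γ * d * (2 / x ^ (1 - γ)) := by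
          apply mul_le_mul_of_nonneg_left hmlow (by positivity)
      _ ≤ 1 * d * (2 / x ^ (1 - γ)) := by
          apply mul_le_mul_of_nonneg_right
            (mul_le_mul_of_nonneg_right hγ1.le hd0.le) (by positivity)
      _ = 6 * (d / (3 * x ^ (1 - γ))) := by
          field_simp; ring
      _ ≤ 6 * (d / (x ^ (1 - γ) + y ^ (1 - γ))) := by
          apply mul_le_mul_of_nonneg_left _ (by norm_num)
          apply div_le_div_of_nonneg_left hd0.le (by positivity) hsum3
  -- exponential difference
  set A := lam * x ^ γ with hA
  set B := lam * y ^ γ with hB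
  have hD : |A - B| = lam * |x ^ γ - y ^ γ| := by
    rw [hA, hB, ← mul_sub, abs_mul, abs_of_pos hlam]
  have hDpos : 0 ≤ |A - B| := abs_nonneg _
  have hminle : min A B ≤ A := min_le_left _ _
  have hE : |Real.exp A - Real.exp B| ≤
      Real.exp (min A B) * (Real.exp |A - B| - 1) := by
    rcases le_total A B with hAB | hAB
    · have h1 : |Real.exp A - Real.exp B| = Real.exp B - Real.exp A := by
        rw [abs_sub_comm, abs_of_nonneg (by simp [Real.exp_le_exp, hAB])]
      have h2 : min A B = A := min_eq_left hAB
      have h3 : |A - B| = B - A := by rw [abs_sub_comm, abs_of_nonneg (by linarith)]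
      rw [h1, h2, h3, mul_sub, ← Real.exp_add, mul_one]
      have h4 : A + (B - A) = B := by ring
      rw [h4]
    · have h1 : |Real.exp A - Real.exp B| = Real.exp A - Real.exp B := by
        rw [abs_of_nonneg (by simp [Real.exp_le_exp, hAB])]
      have h2 : min A B = B := min_eq_right hAB
      have h3 : |A - B| = A - B := abs_of_nonneg (by linarith)
      rw [h1, h2, h3, mul_sub, ← Real.exp_add, mul_one]
      have h4 : B + (A - B) = A := by ring
      rw [h4]
  have hE2 : Real.exp |A - B| - 1 ≤ |A - B| * Real.exp |A - B| :=
    exp_sub_one_le _ hDpos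
  have hexpA : Real.exp (min A B) ≤ Real.exp A := Real.exp_le_exp.mpr hminle
  have hDb1 : |A - B| ≤ γ * lam * d ^ γ := by
    rw [hD]; calc lam * |x ^ γ - y ^ γ| ≤ lam * (γ * d ^ γ) :=
        mul_le_mul_of_nonneg_left hb1 hlam.le
      _ = γ * lam * d ^ γ := by ring
  have hDb2 : |A - B| ≤ lam * 6 * (d / (x ^ (1 - γ) + y ^ (1 - γ))) := by
    rw [hD]; calc lam * |x ^ γ - y ^ γ| ≤ lam * (6 * (d / (x ^ (1 - γ) + y ^ (1 - γ)))) :=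
        mul_le_mul_of_nonneg_left hb2 hlam.le
      _ = lam * 6 * (d / (x ^ (1 - γ) + y ^ (1 - γ))) := by ring
  have hfinal : |Real.exp A - Real.exp B| ≤
      (lam * 6 * (d / (x ^ (1 - γ) + y ^ (1 - γ)))) *
        Real.exp (γ * lam * d ^ γ) * Real.exp A := by
    calc |Real.exp A - Real.exp B|
        ≤ Real.exp (min A B) * (Real.exp |A - B| - 1) := hE
      _ ≤ Real.exp A * (|A - B| * Real.exp |A - B|) := by
          apply mul_le_mul hexpA hE2 (by linarith [Real.add_one_le_exp |A - B|, hDpos])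
            (Real.exp_pos _).le
      _ ≤ Real.exp A * ((lam * 6 * (d / (x ^ (1 - γ) + y ^ (1 - γ)))) *
            Real.exp (γ * lam * d ^ γ)) := by
          apply mul_le_mul_of_nonneg_left _ (Real.exp_pos _).le
          exact mul_le_mul hDb2 (Real.exp_le_exp.mpr hDb1) (Real.exp_pos _).le
            (by positivity)
      _ = (lam * 6 * (d / (x ^ (1 - γ) + y ^ (1 - γ)))) *
            Real.exp (γ * lam * d ^ γ) * Real.exp A := by ring
  exact hfinal
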